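/- Let v be the monomial valuation on ℂ[x,y,z] with weights (3,2,1). If ψ = x² + y³ + η(y,z), where η has order of vanishing at 0 at least 4 and contains no monomials y·zˡ with l ≤ 3 and no monomials zˡ with l ≤ 5, then v(ψ) = 6, and hence (3+2+1−1)/v(ψ) = 5/6. -/
import Mathlib


open MvPolynomial

/-- The monomial valuation with weight vector `w`: minimum of the `w`-weighted
degree over monomials with nonzero coefficient. -/
noncomputable def wval {n : ℕ} (w : Fin n → ℕ) (ψ : MvPolynomial (Fin n) ℂ) : ℕ :=
  (ψ.support.inf fun m => (∑ i, w i * m i : ℕ∞)).toNat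

theorem stmt2 (η : MvPolynomial (Fin 3) ℂ)
    (hx : ∀ m ∈ η.support, m 0 = 0)
    (hord : ∀ m ∈ η.support, 4 ≤ m 1 + m 2)
    (hyz : ∀ m ∈ η.support, ¬(m 1 = 1 ∧ m 2 ≤ 3))
    (hz : ∀ m ∈ η.support, ¬(m 1 = 0 ∧ m 2 ≤ 5)) :
    wval ![3,2,1] (X 0 ^ 2 + X 1 ^ 3 + η) = 6 ∧
      ((3 + 2 + 1 : ℚ) - 1) / (wval ![3,2,1] (X 0 ^ 2 + X 1 ^ 3 + η)) = 5 / 6 := by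
  set ψ := (X 0 ^ 2 + X 1 ^ 3 + η : MvPolynomial (Fin 3) ℂ) with hψ
  have hη0 : coeff (Finsupp.single 0 2) η = 0 := by
    by_contra h
    have hm : (Finsupp.single (0 : Fin 3) 2) ∈ η.support := mem_support_iff.mpr h
    have := hx _ hm
    simp [Finsupp.single_apply] at this
  have hmem : (Finsupp.single (0 : Fin 3) 2) ∈ ψ.support := by
    rw [mem_support_iff, hψ]
    simp [coeff_add, coeff_X_pow, hη0, Finsupp.single_eq_single_iff]
  have hwt : (fun (m : Fin 3 →₀ ℕ) => (∑ i, (![3,2,1] : Fin 3 → ℕ) i * m i : ℕ∞)) (Finsupp.single (0 : Fin 3) 2) = 6 := by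
    simp [Fin.sum_univ_three, Finsupp.single_apply]
    norm_num
  have hle : ∀ m ∈ ψ.support, (6 : ℕ∞) ≤ (fun (m : Fin 3 →₀ ℕ) => (∑ i, (![3,2,1] : Fin 3 → ℕ) i * m i : ℕ∞)) m := by
    intro m hm
    have hnat : 6 ≤ 3 * m 0 + 2 * m 1 + m 2 := by
      have hsub : m ∈ (X 0 ^ 2 + X 1 ^ 3 : MvPolynomial (Fin 3) ℂ).support ∪ η.support := by
        apply Finset.mem_of_subset _ hm
        rw [hψ]
        exact (MvPolynomial.support_add)
      rcases Finset.mem_union.mp hsub with h | h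
      · have := MvPolynomial.support_add h
        rcases Finset.mem_union.mp this with h' | h'
        · have : m = Finsupp.single 0 2 := by
            have := MvPolynomial.support_X_pow (R := ℂ) (0 : Fin 3) 2
            rw [this] at h'
            exact Finset.mem_singleton.mp h'
          subst this
          simp [Finsupp.single_apply]
        · have : m = Finsupp.single 1 3 := by
            have := MvPolynomial.support_X_pow (R := ℂ) (1 : Fin 3) 3
            rw [this] at h'
            exact Finset.mem_singleton.mp h'
          subst this
          simp [Finsupp.single_apply]
      · have h0 := hx m h
        have h1 := hord m h
        have h2 := hyz m h
        have h3 := hz m h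
        rw [h0]
        omega
    calc (6 : ℕ∞) = ((6 : ℕ) : ℕ∞) := by norm_num
    _ ≤ ((3 * m 0 + 2 * m 1 + m 2 : ℕ) : ℕ∞) := by exact_mod_cast hnat
    _ = (fun (m : Fin 3 →₀ ℕ) => (∑ i, (![3,2,1] : Fin 3 → ℕ) i * m i : ℕ∞)) m := by
        push_cast
        simp [Fin.sum_univ_three]
  have hinf : (ψ.support.inf fun m => (∑ i, (![3,2,1] : Fin 3 → ℕ) i * m i : ℕ∞)) = 6 := by
    apply le_antisymm
    · calc _ ≤ _ := Finset.inf_le hmem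
        _ = (6 : ℕ∞) := hwt
    · exact Finset.le_inf hle
  have hw : wval ![3,2,1] ψ = 6 := by
    rw [wval, hinf]; rfl
  refine ⟨hw, ?_⟩
  rw [hw]
  norm_num
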